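/- arXiv:1204.3523 — 4 statements merged into one kernel-verified Lean document; each statement's English description precedes it below -/
import Mathlib

section
/- Under the MWU misclassification dynamics, if the dynamics is c-bounded for some c ∈ (0,1), then the set S = {x ∈ D : |{t ∈ {1,…,T} : x ∈ M_t}| ≥ T/2} of points lying in at least half of the sets M_1, …, M_T satisfies |S| ≤ n · ((1 + cρ) / (1+ρ)^{1/2})^T. -/
/-- MWU misclassification dynamics: weights `w_t(x) = (1+ρ)^{|{s : 1 ≤ s ≤ t, x ∈ M s}|}`.
If the dynamics is `c`-bounded for some `c ∈ (0,1)`, then the set `S` of points lying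
in at least half of the sets `M 1, …, M T` satisfies
`|S| ≤ n · ((1 + cρ) / (1+ρ)^{1/2})^T`, where `(1+ρ)^{1/2}` is the real power. -/
theorem mwu_majority_misclassified_bound {α : Type*} [DecidableEq α]
    (D : Finset α) (n : ℕ) (hn : D.card = n)
    (ρ : ℝ) (hρ : 0 < ρ)
    (T : ℕ) (hT : 0 < T)
    (M : ℕ → Finset α) (hM : ∀ t, 1 ≤ t → t ≤ T → M t ⊆ D)
    (c : ℝ) (hc0 : 0 < c) (hc1 : c < 1)
    (hbounded : ∀ t < T,
      ∑ x ∈ M (t + 1),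
          (1 + ρ) ^ (((Finset.Icc 1 t).filter (fun s => x ∈ M s)).card)
        ≤ c * ∑ x ∈ D,
          (1 + ρ) ^ (((Finset.Icc 1 t).filter (fun s => x ∈ M s)).card)) :
    ((D.filter (fun x =>
        T ≤ 2 * ((Finset.Icc 1 T).filter (fun s => x ∈ M s)).card)).card : ℝ)
      ≤ (n : ℝ) * ((1 + c * ρ) / (1 + ρ) ^ ((1 : ℝ) / 2)) ^ T := by
  have h1ρ : (1 : ℝ) < 1 + ρ := by linarith
  have h0ρ : (0 : ℝ) < 1 + ρ := by linarith
  set w : ℕ → α → ℝ := fun t x =>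
    (1 + ρ) ^ (((Finset.Icc 1 t).filter (fun s => x ∈ M s)).card) with hw
  have hwpos : ∀ t x, 0 < w t x := fun t x => pow_pos h0ρ _
  -- step lemma
  have hstep : ∀ t < T, ∑ x ∈ D, w (t + 1) x ≤ (1 + c * ρ) * ∑ x ∈ D, w t x := by
    intro t ht
    have hsub : M (t + 1) ⊆ D := hM (t + 1) (Nat.le_add_left 1 t) (by omega)
    have hrec : ∀ x, w (t + 1) x = w t x + (if x ∈ M (t + 1) then ρ * w t x else 0) := by
      intro x
      have hicc : Finset.Icc 1 (t + 1) = insert (t + 1) (Finset.Icc 1 t) := by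
        ext a; simp only [Finset.mem_Icc, Finset.mem_insert]; omega
      by_cases hx : x ∈ M (t + 1)
      · simp only [hw, hicc, Finset.filter_insert, hx, if_pos, if_true]
        rw [Finset.card_insert_of_notMem (by simp)]
        rw [pow_succ]
        ring
      · simp only [hw, hicc, Finset.filter_insert, hx, if_false]
        ring
    calc ∑ x ∈ D, w (t + 1) x
        = ∑ x ∈ D, w t x + ∑ x ∈ D, (if x ∈ M (t + 1) then ρ * w t x else 0) := by
          rw [← Finset.sum_add_distrib]; exact Finset.sum_congr rfl fun x _ => hrec x
      _ = ∑ x ∈ D, w t x + ρ * ∑ x ∈ M (t + 1), w t x := by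
          have hfe : D.filter (fun a => a ∈ M (t + 1)) = M (t + 1) := by
            ext a
            simp only [Finset.mem_filter]
            exact ⟨fun h => h.2, fun h => ⟨hsub h, h⟩⟩
          rw [← Finset.sum_filter, hfe, Finset.mul_sum]
      _ ≤ ∑ x ∈ D, w t x + ρ * (c * ∑ x ∈ D, w t x) := by
          have := hbounded t ht
          nlinarith [this]
      _ = (1 + c * ρ) * ∑ x ∈ D, w t x := by ring
  -- total weight bound
  have htot : ∀ t ≤ T, ∑ x ∈ D, w t x ≤ (n : ℝ) * (1 + c * ρ) ^ t := by
    intro t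
    induction t with
    | zero =>
      intro _
      simp only [hw]
      simp [Finset.Icc_eq_empty_of_lt (by omega : (1:ℕ) > 0)]
      simp [hn]
    | succ t ih =>
      intro hle
      have h1 := hstep t (by omega)
      have h2 := ih (by omega)
      have hcρ : (0 : ℝ) < 1 + c * ρ := by nlinarith
      calc ∑ x ∈ D, w (t + 1) x ≤ (1 + c * ρ) * ∑ x ∈ D, w t x := h1
        _ ≤ (1 + c * ρ) * ((n : ℝ) * (1 + c * ρ) ^ t) := by
            exact mul_le_mul_of_nonneg_left h2 (le_of_lt hcρ)
        _ = (n : ℝ) * (1 + c * ρ) ^ (t + 1) := by ring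
  set S := D.filter (fun x =>
      T ≤ 2 * ((Finset.Icc 1 T).filter (fun s => x ∈ M s)).card) with hS
  set B : ℝ := ((1 + ρ) ^ ((1 : ℝ) / 2)) ^ T with hB
  have hBpos : 0 < B := pow_pos (Real.rpow_pos_of_pos h0ρ _) _
  -- each element of S has weight at least B
  have hlow : ∀ x ∈ S, B ≤ w T x := by
    intro x hx
    rw [hS, Finset.mem_filter] at hx
    have hk : (T : ℝ) / 2 ≤ (((Finset.Icc 1 T).filter (fun s => x ∈ M s)).card : ℝ) := by
      have := hx.2
      have : (T : ℝ) ≤ 2 * (((Finset.Icc 1 T).filter (fun s => x ∈ M s)).card : ℝ) := by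
        exact_mod_cast this
      linarith
    have hB' : B = (1 + ρ) ^ ((T : ℝ) / 2) := by
      rw [hB, ← Real.rpow_natCast ((1 + ρ) ^ ((1:ℝ)/2)) T, ← Real.rpow_mul (le_of_lt h0ρ)]
      ring_nf
    rw [hB', hw]
    calc (1 + ρ) ^ ((T : ℝ) / 2)
        ≤ (1 + ρ) ^ ((((Finset.Icc 1 T).filter (fun s => x ∈ M s)).card : ℕ) : ℝ) :=
          Real.rpow_le_rpow_of_exponent_le (le_of_lt h1ρ) hk
      _ = (1 + ρ) ^ (((Finset.Icc 1 T).filter (fun s => x ∈ M s)).card) := by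
          rw [Real.rpow_natCast]
  have hcard : (S.card : ℝ) * B ≤ (n : ℝ) * (1 + c * ρ) ^ T := by
    calc (S.card : ℝ) * B = ∑ _x ∈ S, B := by rw [Finset.sum_const, nsmul_eq_mul]
      _ ≤ ∑ x ∈ S, w T x := Finset.sum_le_sum hlow
      _ ≤ ∑ x ∈ D, w T x :=
          Finset.sum_le_sum_of_subset_of_nonneg (Finset.filter_subset _ _)
            (fun x _ _ => le_of_lt (hwpos T x))
      _ ≤ (n : ℝ) * (1 + c * ρ) ^ T := htot T le_rfl
  have : ((1 + c * ρ) / (1 + ρ) ^ ((1 : ℝ) / 2)) ^ T = (1 + c * ρ) ^ T / B := by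
    rw [hB, div_pow]
  rw [this, ← mul_div_assoc, le_div_iff₀ hBpos]
  linarith [hcard]
end

section
/- Under the MWU misclassification dynamics with ρ = 3/4, suppose n ≥ 1, the dynamics is c-bounded with c = 1/5, 0 < ε < 1, and the number of rounds T satisfies T ≥ 5 · log₂(1/ε). Then the set S = {x ∈ D : |{t ∈ {1,…,T} : x ∈ M_t}| ≥ T/2} of points lying in at least half of the sets M_1, …, M_T satisfies |S| < ε · n. -/
/-- Combinatorial core of Theorem 4.2: under the MWU misclassification dynamics with
`ρ = 3/4`, if `n ≥ 1`, the dynamics is `c`-bounded with `c = 1/5`, `0 < ε < 1`, and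
the number of rounds satisfies `T ≥ 5 · log₂(1/ε)`, then the set `S` of points lying
in at least half of the sets `M 1, …, M T` satisfies `|S| < ε · n`. -/
theorem mwu_main_bound {α : Type*} [DecidableEq α]
    (D : Finset α) (n : ℕ) (hn : D.card = n) (hn1 : 1 ≤ n)
    (T : ℕ) (hT : 0 < T)
    (M : ℕ → Finset α) (hM : ∀ t, 1 ≤ t → t ≤ T → M t ⊆ D)
    (ε : ℝ) (hε0 : 0 < ε) (hε1 : ε < 1)
    (hTε : (T : ℝ) ≥ 5 * Real.logb 2 (1 / ε))
    (hbounded : ∀ t < T,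
      ∑ x ∈ M (t + 1),
          (1 + (3/4 : ℝ)) ^ (((Finset.Icc 1 t).filter (fun s => x ∈ M s)).card)
        ≤ (1/5 : ℝ) * ∑ x ∈ D,
          (1 + (3/4 : ℝ)) ^ (((Finset.Icc 1 t).filter (fun s => x ∈ M s)).card)) :
    ((D.filter (fun x =>
        T ≤ 2 * ((Finset.Icc 1 T).filter (fun s => x ∈ M s)).card)).card : ℝ)
      < ε * n := by
  have h74 : (1 + (3/4 : ℝ)) = 7/4 := by norm_num
  simp only [h74] at hbounded
  set c : ℕ → α → ℕ := fun t x => ((Finset.Icc 1 t).filter (fun s => x ∈ M s)).card with hc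
  -- potential bound
  have key : ∀ t, t ≤ T → ∑ x ∈ D, (7/4:ℝ) ^ (c t x) ≤ (n : ℝ) * (23/20:ℝ)^t := by
    intro t
    induction t with
    | zero => intro _; simp [c, hn]
    | succ t ih =>
      intro ht
      have ih' := ih (Nat.le_of_succ_le ht)
      have hins : Finset.Icc 1 (t+1) = insert (t+1) (Finset.Icc 1 t) := by
        ext s
        simp only [Finset.mem_Icc, Finset.mem_insert]
        omega
      have hcx : ∀ x, c (t+1) x = (if x ∈ M (t+1) then c t x + 1 else c t x) := by
        intro x
        simp only [c, hins, Finset.filter_insert]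
        split_ifs with h
        · exact Finset.card_insert_of_notMem (by simp)
        · rfl
      have hstep : ∑ x ∈ D, (7/4:ℝ) ^ (c (t+1) x)
          = ∑ x ∈ D, (7/4:ℝ) ^ (c t x)
            + (3/4) * ∑ x ∈ M (t+1), (7/4:ℝ) ^ (c t x) := by
        have h1 : ∑ x ∈ D, (7/4:ℝ) ^ (c (t+1) x)
            = ∑ x ∈ D, ((7/4:ℝ) ^ (c t x)
              + if x ∈ M (t+1) then (3/4) * (7/4:ℝ) ^ (c t x) else 0) := by
          refine Finset.sum_congr rfl fun x _ => ?_
          rw [hcx x]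
          split_ifs with h
          · rw [pow_succ]; ring
          · ring
        rw [h1, Finset.sum_add_distrib]
        congr 1
        rw [Finset.sum_ite_mem, Finset.mul_sum]
        congr 1
        exact Finset.inter_eq_right.mpr (hM (t+1) (by omega) ht)
      have hb := hbounded t (by omega)
      have hsum0 : (0:ℝ) ≤ ∑ x ∈ D, (7/4:ℝ) ^ (c t x) :=
        Finset.sum_nonneg fun x _ => by positivity
      rw [hstep]
      have : ∑ x ∈ D, (7/4:ℝ) ^ (c t x) + (3/4) * ∑ x ∈ M (t+1), (7/4:ℝ) ^ (c t x)
          ≤ (23/20) * ∑ x ∈ D, (7/4:ℝ) ^ (c t x) := by nlinarith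
      calc _ ≤ (23/20) * ∑ x ∈ D, (7/4:ℝ) ^ (c t x) := this
        _ ≤ (23/20) * ((n : ℝ) * (23/20:ℝ)^t) := by nlinarith
        _ = (n : ℝ) * (23/20:ℝ)^(t+1) := by ring
  set S := D.filter (fun x => T ≤ 2 * c T x) with hS
  set b : ℝ := Real.sqrt (7/4) with hbdef
  have hb2 : b ^ 2 = 7/4 := Real.sq_sqrt (by norm_num)
  have hb1 : (1:ℝ) ≤ b := by
    rw [hbdef]
    rw [show (1:ℝ) = Real.sqrt 1 by simp]
    exact Real.sqrt_le_sqrt (by norm_num)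
  have hb0 : (0:ℝ) < b := by linarith
  -- each element of S has weight at least b^T
  have hlow : ∀ x ∈ S, b ^ T ≤ (7/4:ℝ) ^ (c T x) := by
    intro x hx
    have hx2 : T ≤ 2 * c T x := (Finset.mem_filter.mp hx).2
    calc b ^ T ≤ b ^ (2 * c T x) := pow_le_pow_right₀ hb1 hx2
      _ = (b ^ 2) ^ (c T x) := by rw [pow_mul]
      _ = (7/4:ℝ) ^ (c T x) := by rw [hb2]
  have hcard : (S.card : ℝ) * b ^ T ≤ (n : ℝ) * (23/20:ℝ)^T := by
    calc (S.card : ℝ) * b ^ T = S.card • (b ^ T) := by rw [nsmul_eq_mul]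
      _ ≤ ∑ x ∈ S, (7/4:ℝ) ^ (c T x) := Finset.card_nsmul_le_sum S _ _ hlow
      _ ≤ ∑ x ∈ D, (7/4:ℝ) ^ (c T x) := by
          refine Finset.sum_le_sum_of_subset_of_nonneg (Finset.filter_subset _ _)
            (fun x _ _ => by positivity)
      _ ≤ (n : ℝ) * (23/20:ℝ)^T := key T le_rfl
  -- ratio r
  set r : ℝ := (23/20) / b with hrdef
  have hr0 : 0 < r := by positivity
  have hr5 : r ^ 5 < 1/2 := by
    have hbpow5 : (0:ℝ) < b ^ 5 := by positivity
    have hsq : (2 * (23/20:ℝ)^5) ^ 2 < (b ^ 5) ^ 2 := by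
      have : (b ^ 5) ^ 2 = (b ^ 2) ^ 5 := by ring
      rw [this, hb2]; norm_num
    have h2 : 2 * (23/20:ℝ)^5 < b ^ 5 :=
      lt_of_pow_lt_pow_left₀ 2 hbpow5.le hsq
    rw [hrdef, div_pow, div_lt_iff₀ hbpow5]
    linarith
  have hr1 : r ≤ 1 := by
    by_contra h
    push_neg at h
    have : (1:ℝ) < r ^ 5 := one_lt_pow₀ h (by norm_num)
    linarith
  -- r^T < ε
  have hL : 0 < Real.logb 2 (1/ε) :=
    Real.logb_pos (by norm_num) (by rw [lt_div_iff₀ hε0]; linarith)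
  have hrT : r ^ T < ε := by
    have h1 : r ^ (T:ℝ) ≤ r ^ (5 * Real.logb 2 (1/ε)) :=
      Real.rpow_le_rpow_of_exponent_ge hr0 hr1 hTε
    have h2 : r ^ (5 * Real.logb 2 (1/ε))
        = (r ^ (5:ℕ)) ^ (Real.logb 2 (1/ε)) := by
      rw [← Real.rpow_natCast r 5, ← Real.rpow_mul hr0.le]
      norm_num
    have h3 : (r ^ (5:ℕ)) ^ (Real.logb 2 (1/ε))
        < (1/2 : ℝ) ^ (Real.logb 2 (1/ε)) :=
      Real.rpow_lt_rpow (by positivity) hr5 hL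
    have h4 : (1/2 : ℝ) ^ (Real.logb 2 (1/ε)) = ε := by
      rw [show (1/2:ℝ) = 2⁻¹ by norm_num,
        Real.inv_rpow (by norm_num), Real.rpow_logb (by norm_num) (by norm_num)
          (by positivity)]
      simp
    have := h1.trans_lt (h2 ▸ h4 ▸ h3)
    rwa [Real.rpow_natCast] at this
  -- finish
  have hbT : (0:ℝ) < b ^ T := by positivity
  have hfin : (n : ℝ) * (23/20:ℝ)^T < ε * n * b ^ T := by
    have hab : (23/20:ℝ)^T < ε * b ^ T := by
      have : r ^ T = (23/20:ℝ)^T / b ^ T := by rw [hrdef, div_pow]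
      rw [this, div_lt_iff₀ hbT] at hrT
      exact hrT
    have hn0 : (0:ℝ) < n := by exact_mod_cast hn1
    nlinarith
  have : (S.card : ℝ) * b ^ T < (ε * n) * b ^ T := lt_of_le_of_lt hcard (by linarith)
  exact lt_of_mul_lt_mul_right this hbT.le
end

section
/- Let D be a finite set with |D| = n ≥ 1 of points labeled by y : D → Bool, and let h_1, …, h_T : D → Bool be classifiers, with T a positive natural number. For each t let M_t = {x ∈ D : h_t(x) ≠ y(x)}, and define weights w_t(x) = (7/4)^{|{s : 1 ≤ s ≤ t, x ∈ M_s}|} (i.e., the MWU misclassification dynamics with ρ = 3/4). Define the majority-vote classifier H : D → Bool by H(x) = true if and only if |{t : h_t(x) = true}| > T/2. Suppose 0 < ε < 1, T ≥ 5 · log₂(1/ε), and for every t with 0 ≤ t < T one has Σ_{x ∈ M_{t+1}} w_t(x) ≤ (1/5) · Σ_{x ∈ D} w_t(x). Then |{x ∈ D : H(x) ≠ y(x)}| < ε · n. -/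
/-- Theorem 4.2 of the paper in combinatorial form.  `D` is a finite set of `n ≥ 1`
points labeled by `y`, and `h 1, …, h T` are classifiers.  `M t` is the set of points
of `D` misclassified by `h t`, and the weights follow the MWU misclassification
dynamics with `ρ = 3/4` (base `7/4`).  `H` is the majority-vote classifier:
`H x = true` iff more than `T/2` of the classifiers output `true` on `x`.
If `0 < ε < 1`, `T ≥ 5 · log₂(1/ε)`, and in each round the misclassified points
carry at most a `1/5`-fraction of the current total weight, then the majority vote
misclassifies fewer than `ε · n` points. -/
theorem mwu_majority_vote_bound {α : Type*} [DecidableEq α]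
    (D : Finset α) (n : ℕ) (hn : D.card = n) (hn1 : 1 ≤ n)
    (y : α → Bool)
    (T : ℕ) (hT : 0 < T)
    (h : ℕ → α → Bool)
    (M : ℕ → Finset α) (hMdef : ∀ t, M t = D.filter (fun x => h t x ≠ y x))
    (H : α → Bool)
    (hH : ∀ x, H x = true ↔
      T < 2 * ((Finset.Icc 1 T).filter (fun t => h t x = true)).card)
    (ε : ℝ) (hε0 : 0 < ε) (hε1 : ε < 1)
    (hTε : (T : ℝ) ≥ 5 * Real.logb 2 (1 / ε))
    (hbounded : ∀ t < T,
      ∑ x ∈ M (t + 1),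
          ((7/4 : ℝ)) ^ (((Finset.Icc 1 t).filter (fun s => x ∈ M s)).card)
        ≤ (1/5 : ℝ) * ∑ x ∈ D,
          ((7/4 : ℝ)) ^ (((Finset.Icc 1 t).filter (fun s => x ∈ M s)).card)) :
    ((D.filter (fun x => H x ≠ y x)).card : ℝ) < ε * n := by
  classical
  have hMsub : ∀ t, M t ⊆ D := fun t => by rw [hMdef t]; exact Finset.filter_subset _ _
  set w : ℕ → α → ℝ := fun t x =>
    (7/4:ℝ) ^ (((Finset.Icc 1 t).filter (fun s => x ∈ M s)).card) with hw
  set Φ : ℕ → ℝ := fun t => ∑ x ∈ D, w t x with hΦ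
  have hwpos : ∀ t x, 0 < w t x := fun t x => by positivity
  -- weight evolution step
  have hstep : ∀ t, t < T → Φ (t+1) ≤ (23/20) * Φ t := by
    intro t ht
    have hwsucc : ∀ x, w (t+1) x = w t x + (3/4) * (if x ∈ M (t+1) then w t x else 0) := by
      intro x
      have hicc : Finset.Icc 1 (t+1) = insert (t+1) (Finset.Icc 1 t) := by
        rw [← Finset.insert_Icc_right_eq_Icc_add_one (by omega)]
      by_cases hx : x ∈ M (t+1)
      · have hcard : ((Finset.Icc 1 (t+1)).filter (fun s => x ∈ M s)).card
            = ((Finset.Icc 1 t).filter (fun s => x ∈ M s)).card + 1 := by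
          rw [hicc, Finset.filter_insert, if_pos hx,
            Finset.card_insert_of_notMem (by simp [Finset.mem_Icc])]
        simp only [hw, hcard, pow_succ, if_pos hx]; ring
      · have hcard : ((Finset.Icc 1 (t+1)).filter (fun s => x ∈ M s)).card
            = ((Finset.Icc 1 t).filter (fun s => x ∈ M s)).card := by
          rw [hicc, Finset.filter_insert, if_neg hx]
        simp only [hw, hcard, if_neg hx]; ring
    have hsum : Φ (t+1) = Φ t + (3/4) * ∑ x ∈ M (t+1), w t x := by
      simp only [hΦ]
      rw [Finset.sum_congr rfl (fun x _ => hwsucc x), Finset.sum_add_distrib,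
        ← Finset.mul_sum, Finset.sum_ite_mem, Finset.inter_eq_right.mpr (hMsub (t+1))]
    have hb' : ∑ x ∈ M (t+1), w t x ≤ (1/5) * Φ t := hbounded t ht
    rw [hsum]; linarith
  have hΦ0 : Φ 0 = (n:ℝ) := by
    have hz : ∀ x : α, ((Finset.Icc 1 0).filter (fun s => x ∈ M s)).card = 0 := by
      intro x
      rw [Finset.Icc_eq_empty (by omega), Finset.filter_empty, Finset.card_empty]
    simp only [hΦ, hw, hz, pow_zero]
    rw [Finset.sum_const, nsmul_eq_mul, mul_one, hn]
  have hΦT : Φ T ≤ (n:ℝ) * (23/20:ℝ)^T := by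
    have key : ∀ t, t ≤ T → Φ t ≤ (n:ℝ) * (23/20:ℝ)^t := by
      intro t
      induction t with
      | zero => intro _; rw [hΦ0]; simp
      | succ t ih =>
        intro h1
        have h2 : t < T := by omega
        have h3 := ih (by omega)
        calc Φ (t+1) ≤ (23/20) * Φ t := hstep t h2
          _ ≤ (23/20) * ((n:ℝ)*(23/20:ℝ)^t) := by linarith
          _ = (n:ℝ) * (23/20:ℝ)^(t+1) := by ring
    exact key T le_rfl
  -- majority misclassified points are in M t at least T/2 times
  have hkey : ∀ x ∈ D.filter (fun x => H x ≠ y x),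
      T ≤ 2 * ((Finset.Icc 1 T).filter (fun s => x ∈ M s)).card := by
    intro x hx
    rw [Finset.mem_filter] at hx
    obtain ⟨hxD, hxy⟩ := hx
    have hcount := Finset.card_filter_add_card_filter_not
      (s := Finset.Icc 1 T) (p := fun t => h t x = true)
    rw [Nat.card_Icc] at hcount
    cases hy : y x with
    | true =>
      have hHx : ¬ (T < 2 * ((Finset.Icc 1 T).filter (fun t => h t x = true)).card) := by
        intro hlt
        exact hxy (by rw [(hH x).mpr hlt, hy])
      have hMeq : (Finset.Icc 1 T).filter (fun s => x ∈ M s)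
          = (Finset.Icc 1 T).filter (fun t => ¬ (h t x = true)) := by
        apply Finset.filter_congr
        intro s _
        rw [hMdef s, Finset.mem_filter]
        simp [hxD, hy]
      rw [hMeq]
      omega
    | false =>
      have hHx : T < 2 * ((Finset.Icc 1 T).filter (fun t => h t x = true)).card := by
        apply (hH x).mp
        cases hHv : H x
        · exact absurd (by rw [hHv, hy]) hxy
        · rfl
      have hMeq : (Finset.Icc 1 T).filter (fun s => x ∈ M s)
          = (Finset.Icc 1 T).filter (fun t => h t x = true) := by
        apply Finset.filter_congr
        intro s _
        rw [hMdef s, Finset.mem_filter]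
        simp [hxD, hy]
      rw [hMeq]
      omega
  set B := D.filter (fun x => H x ≠ y x) with hB
  have hp : (0:ℝ) < (7/4:ℝ) ^ ((T:ℝ)/2) := Real.rpow_pos_of_pos (by norm_num) _
  have hlow : (B.card : ℝ) * (7/4:ℝ) ^ ((T:ℝ)/2) ≤ Φ T := by
    have step1 : ∀ x ∈ B, (7/4:ℝ) ^ ((T:ℝ)/2) ≤ w T x := by
      intro x hx
      have h2 := hkey x hx
      have h3 : (T:ℝ) ≤ 2 * (((Finset.Icc 1 T).filter (fun s => x ∈ M s)).card : ℝ) := by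
        exact_mod_cast h2
      calc (7/4:ℝ) ^ ((T:ℝ)/2)
          ≤ (7/4:ℝ) ^ ((((Finset.Icc 1 T).filter (fun s => x ∈ M s)).card : ℝ)) :=
            Real.rpow_le_rpow_of_exponent_le (by norm_num) (by linarith)
        _ = w T x := by rw [Real.rpow_natCast]
    calc (B.card : ℝ) * (7/4:ℝ) ^ ((T:ℝ)/2) = ∑ _x ∈ B, (7/4:ℝ) ^ ((T:ℝ)/2) := by
          rw [Finset.sum_const, nsmul_eq_mul]
      _ ≤ ∑ x ∈ B, w T x := Finset.sum_le_sum step1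
      _ ≤ Φ T := Finset.sum_le_sum_of_subset_of_nonneg (Finset.filter_subset _ _)
            (fun x _ _ => (hwpos T x).le)
  -- numerics
  have hL : 0 < Real.logb 2 (1/ε) := by
    apply Real.logb_pos (by norm_num)
    rw [lt_div_iff₀ hε0]; linarith
  have hl : (2:ℝ)/5 < Real.logb 2 (700/529) := by
    rw [Real.lt_logb_iff_rpow_lt (by norm_num) (by norm_num)]
    have h5 : ((2:ℝ) ^ ((2:ℝ)/5)) ^ (5:ℕ) = 4 := by
      rw [← Real.rpow_natCast ((2:ℝ) ^ ((2:ℝ)/5)) 5, ← Real.rpow_mul (by norm_num)]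
      rw [show ((2:ℝ)/5 * ((5:ℕ):ℝ)) = ((2:ℕ):ℝ) by push_cast; ring, Real.rpow_natCast]
      norm_num
    have hlt : ((2:ℝ) ^ ((2:ℝ)/5)) ^ (5:ℕ) < (700/529:ℝ)^(5:ℕ) := by
      rw [h5]; norm_num
    exact lt_of_pow_lt_pow_left₀ 5 (by norm_num) hlt
  have hbig : (1/ε : ℝ) < (700/529:ℝ) ^ ((T:ℝ)/2) := by
    have h1ε : (1/ε:ℝ) = (2:ℝ) ^ (Real.logb 2 (1/ε)) :=
      (Real.rpow_logb (by norm_num) (by norm_num) (by positivity)).symm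
    have h2 : (700/529:ℝ) ^ ((T:ℝ)/2)
        = (2:ℝ) ^ (Real.logb 2 (700/529) * ((T:ℝ)/2)) := by
      rw [Real.rpow_mul (by norm_num), Real.rpow_logb (by norm_num) (by norm_num) (by norm_num)]
    rw [h1ε, h2]
    apply (Real.rpow_lt_rpow_left_iff (by norm_num : (1:ℝ) < 2)).mpr
    nlinarith [hL, hl, hTε]
  have hεA : (529/700:ℝ) ^ ((T:ℝ)/2) < ε := by
    have h700 : (0:ℝ) < (700/529:ℝ) ^ ((T:ℝ)/2) := Real.rpow_pos_of_pos (by norm_num) _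
    have he : (529/700:ℝ) ^ ((T:ℝ)/2) = ((700/529:ℝ) ^ ((T:ℝ)/2))⁻¹ := by
      rw [← Real.inv_rpow (by norm_num)]; norm_num
    rw [he, inv_lt_comm₀ h700 hε0]
    simpa [one_div] using hbig
  have hnum : ((23/20:ℝ))^T < ε * (7/4:ℝ) ^ ((T:ℝ)/2) := by
    have e1 : ((23/20:ℝ))^T = ((23/20:ℝ)) ^ ((T:ℝ)) := (Real.rpow_natCast _ _).symm
    have esq : ((23/20:ℝ)) ^ ((2:ℝ)) = 529/400 := by
      rw [show (2:ℝ) = ((2:ℕ):ℝ) by norm_num, Real.rpow_natCast]; norm_num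
    have e2 : ((23/20:ℝ)) ^ ((T:ℝ)) = ((529/400:ℝ)) ^ ((T:ℝ)/2) := by
      rw [show ((T:ℝ)) = 2 * ((T:ℝ)/2) by ring, Real.rpow_mul (by norm_num)]
      norm_num [esq]
    have e3 : ((529/400:ℝ)) ^ ((T:ℝ)/2)
        = ((529/700:ℝ)) ^ ((T:ℝ)/2) * (7/4:ℝ) ^ ((T:ℝ)/2) := by
      rw [← Real.mul_rpow (by norm_num) (by norm_num)]; norm_num
    rw [e1, e2, e3]
    exact mul_lt_mul_of_pos_right hεA hp
  have hnpos : (0:ℝ) < (n:ℝ) := by exact_mod_cast hn1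
  have hfin : (B.card:ℝ) * (7/4:ℝ)^((T:ℝ)/2) < ε * (n:ℝ) * ((7/4:ℝ)^((T:ℝ)/2)) := by
    calc (B.card:ℝ) * (7/4:ℝ)^((T:ℝ)/2) ≤ Φ T := hlow
      _ ≤ (n:ℝ) * (23/20:ℝ)^T := hΦT
      _ < (n:ℝ) * (ε * (7/4:ℝ) ^ ((T:ℝ)/2)) := by
          exact mul_lt_mul_of_pos_left hnum hnpos
      _ = ε * (n:ℝ) * ((7/4:ℝ)^((T:ℝ)/2)) := by ring
  exact lt_of_mul_lt_mul_right hfin hp.le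
end

section
/- There exists an absolute constant C > 0 with the following property. Let n ≥ 2 and d ≥ 1 be natural numbers, let a_1, …, a_n ∈ ℝ^d, b ∈ ℝ^n, let ε be a real with 0 < ε ≤ 1, let ρ ≥ 1 be a real width parameter, and let T be a natural number with T ≥ C · ρ² · (ln n) / ε². Suppose x^{(1)}, …, x^{(T)} ∈ ℝ^d is a sequence of vectors such that: (i) |⟨a_i, x^{(t)}⟩ − b_i| ≤ ρ for all i ∈ {1,…,n} and t ∈ {1,…,T}; and (ii) for every t ∈ {1,…,T}, Σ_{i=1}^n p_i(t) · (⟨a_i, x^{(t)}⟩ − b_i) ≥ 0, where m_i(0) = 0, m_i(t) = m_i(t−1) + ⟨a_i, x^{(t)}⟩ − b_i, and p_i(t) = exp(−ε · m_i(t−1) / (2ρ²)). Then the average x̄ = (1/T) Σ_{t=1}^T x^{(t)} satisfies ⟨a_i, x̄⟩ ≥ b_i − ε for every i ∈ {1,…,n}. -/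
set_option maxHeartbeats 1000000

lemma exp_quad_bound (z : ℝ) (hz : |z| ≤ 1) : Real.exp z ≤ 1 + z + z ^ 2 := by
  have h := Real.exp_bound hz (n := 2) (by norm_num)
  rw [Finset.sum_range_succ, Finset.sum_range_succ, Finset.sum_range_zero] at h
  norm_num at h
  have h2 := (abs_le.mp h).2
  have h3 : |z| ^ 2 = z ^ 2 := sq_abs z
  nlinarith [sq_nonneg z]



/-- MWU guarantee underlying the distributed linear programming protocol (Section 6.2).
There is an absolute constant `C > 0` so that: for hard constraints `⟨a i, x⟩ ≥ b i`
(`i ∈ Fin n`, `n ≥ 2`, points in `ℝ^d`, `d ≥ 1`), accuracy `ε ∈ (0,1]`, width `ρ ≥ 1`,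
and `T ≥ C · ρ² · ln n / ε²` rounds, if the oracle responses `x 1, …, x T` satisfy
(i) `|⟨a i, x t⟩ − b i| ≤ ρ` for all `i, t`, and (ii) in every round the aggregated
constraint `∑ i, p t i · (⟨a i, x t⟩ − b i) ≥ 0` holds, where `m 0 i = 0`,
`m t i = m (t−1) i + ⟨a i, x t⟩ − b i`, and `p t i = exp(−ε · m (t−1) i / (2ρ²))`,
then the average `x̄ = (1/T) ∑_{t=1}^T x t` satisfies `⟨a i, x̄⟩ ≥ b i − ε` for all `i`. -/
theorem mwu_lp_soft_approximation :
    ∃ C : ℝ, 0 < C ∧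
      ∀ (n d : ℕ), 2 ≤ n → 1 ≤ d →
      ∀ (a : Fin n → Fin d → ℝ) (b : Fin n → ℝ)
        (ε ρ : ℝ), 0 < ε → ε ≤ 1 → 1 ≤ ρ →
      ∀ (T : ℕ), (T : ℝ) ≥ C * ρ ^ 2 * Real.log n / ε ^ 2 →
      ∀ (x : ℕ → Fin d → ℝ) (m : ℕ → Fin n → ℝ) (p : ℕ → Fin n → ℝ),
        (∀ i, m 0 i = 0) →
        (∀ t, 1 ≤ t → t ≤ T → ∀ i,
          m t i = m (t - 1) i + ((∑ j, a i j * x t j) - b i)) →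
        (∀ t, 1 ≤ t → t ≤ T → ∀ i,
          p t i = Real.exp (-ε * m (t - 1) i / (2 * ρ ^ 2))) →
        (∀ i, ∀ t, 1 ≤ t → t ≤ T →
          |(∑ j, a i j * x t j) - b i| ≤ ρ) →
        (∀ t, 1 ≤ t → t ≤ T →
          0 ≤ ∑ i, p t i * ((∑ j, a i j * x t j) - b i)) →
        ∀ i, (∑ j, a i j * ((1 / (T : ℝ)) * ∑ t ∈ Finset.Icc 1 T, x t j))
          ≥ b i - ε := by
  refine ⟨4, by norm_num, ?_⟩
  intro n d hn hd a b ε ρ hε hε1 hρ T hT x m p hm0 hmrec hpdef hbound hagg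
  set g : ℕ → Fin n → ℝ := fun t i => (∑ j, a i j * x t j) - b i with hg
  set η : ℝ := ε / (2 * ρ ^ 2) with hηdef
  have hρ0 : (0:ℝ) < ρ := lt_of_lt_of_le one_pos hρ
  have hρ2 : (0:ℝ) < ρ ^ 2 := by positivity
  have hρ2one : (1:ℝ) ≤ ρ ^ 2 := by nlinarith
  have hη0 : 0 < η := by positivity
  have hηρ : η * ρ ≤ 1 := by
    rw [hηdef, div_mul_eq_mul_div, div_le_one (by positivity)]
    nlinarith
  have hεsq : ε ^ 2 ≤ 1 := by nlinarith
  have hn2 : (2:ℝ) ≤ (n:ℝ) := by exact_mod_cast hn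
  have hlogn : Real.log 2 ≤ Real.log n := Real.log_le_log (by norm_num) hn2
  have hlog2 : (0.6931471803 : ℝ) < Real.log 2 := Real.log_two_gt_d9
  have hlogn0 : 0 < Real.log n := by linarith
  have hTlb : (2:ℝ) ≤ (T:ℝ) := by
    refine le_trans ?_ hT
    rw [le_div_iff₀ (by positivity)]
    nlinarith
  have hT0 : (0:ℝ) < (T:ℝ) := by linarith
  have hT1 : 1 ≤ T := by exact_mod_cast le_trans (by norm_num : (1:ℝ) ≤ 2) hTlb
  clear_value g η
  -- m as a sum of gains
  have hmsum : ∀ t, t ≤ T → ∀ i, m t i = ∑ s ∈ Finset.Icc 1 t, g s i := by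
    intro t
    induction t with
    | zero => intro _ i; simpa using hm0 i
    | succ t ih =>
      intro ht i
      have h1 := hmrec (t+1) (by omega) ht i
      simp only [Nat.add_sub_cancel] at h1
      rw [h1, ih (by omega) i, Finset.sum_Icc_succ_top (by omega)]
      simp only [hg]
  -- weights
  have hpw : ∀ t, 1 ≤ t → t ≤ T → ∀ i, p t i = Real.exp (-η * m (t-1) i) := by
    intro t h1 h2 i
    rw [hpdef t h1 h2 i]
    congr 1
    rw [hηdef]; ring
  -- potential bound
  have hΦ : ∀ t, t ≤ T →
      (∑ i, Real.exp (-η * m t i)) ≤ (n:ℝ) * Real.exp (η^2 * ρ^2 * t) := by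
    intro t
    induction t with
    | zero =>
      intro _
      simp [hm0]
    | succ t ih =>
      intro ht
      have ih' := ih (by omega)
      have hstep : ∀ i : Fin n, Real.exp (-η * m (t+1) i) ≤
          Real.exp (-η * m t i) * (1 + (-η * g (t+1) i) + η^2 * (g (t+1) i)^2) := by
        intro i
        have h1 := hmrec (t+1) (by omega) ht i
        simp only [Nat.add_sub_cancel] at h1
        have : -η * m (t+1) i = -η * m t i + (-η * g (t+1) i) := by
          simp only [hg]; rw [h1]; ring
        rw [this, Real.exp_add]
        have habs : |(-η * g (t+1) i)| ≤ 1 := by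
          rw [abs_mul, abs_neg, abs_of_pos hη0]
          have hb : |g (t+1) i| ≤ ρ := by
            simp only [hg]; exact hbound i (t+1) (by omega) ht
          calc η * |g (t+1) i| ≤ η * ρ := mul_le_mul_of_nonneg_left hb hη0.le
            _ ≤ 1 := hηρ
        have hq := exp_quad_bound _ habs
        have hsq : (-η * g (t+1) i)^2 = η^2 * (g (t+1) i)^2 := by ring
        rw [hsq] at hq
        exact mul_le_mul_of_nonneg_left hq (Real.exp_pos _).le
      calc ∑ i, Real.exp (-η * m (t+1) i)
          ≤ ∑ i, Real.exp (-η * m t i) * (1 + (-η * g (t+1) i) + η^2 * (g (t+1) i)^2) :=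
            Finset.sum_le_sum fun i _ => hstep i
        _ = (∑ i, Real.exp (-η * m t i))
            - η * (∑ i, Real.exp (-η * m t i) * g (t+1) i)
            + η^2 * (∑ i, Real.exp (-η * m t i) * (g (t+1) i)^2) := by
            rw [Finset.mul_sum, Finset.mul_sum, ← Finset.sum_sub_distrib,
              ← Finset.sum_add_distrib]
            exact Finset.sum_congr rfl fun i _ => by ring
        _ ≤ (∑ i, Real.exp (-η * m t i)) * (1 + η^2 * ρ^2) := by
            have hpos : 0 ≤ ∑ i, Real.exp (-η * m t i) * g (t+1) i := by
              have h := hagg (t+1) (by omega) ht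
              have : ∀ i : Fin n, p (t+1) i = Real.exp (-η * m t i) := by
                intro i
                have := hpw (t+1) (by omega) ht i
                simpa using this
              have h2 : 0 ≤ ∑ i : Fin n,
                  Real.exp (-η * m t i) * ((∑ j, a i j * x (t+1) j) - b i) := by
                refine le_trans h (le_of_eq ?_)
                exact Finset.sum_congr rfl fun i _ => by rw [this i]
              simp only [hg]
              exact h2
            have hsq : (∑ i, Real.exp (-η * m t i) * (g (t+1) i)^2)
                ≤ ρ^2 * (∑ i, Real.exp (-η * m t i)) := by
              rw [Finset.mul_sum]
              refine Finset.sum_le_sum fun i _ => ?_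
              have hb := abs_le.mp (hbound i (t+1) (by omega) ht)
              have hgb : g (t+1) i ^ 2 ≤ ρ^2 := by
                simp only [hg]; nlinarith [hb.1, hb.2]
              nlinarith [(Real.exp_pos (-η * m t i)).le, hgb]
            nlinarith [hη0, sq_nonneg η]
        _ ≤ (n:ℝ) * Real.exp (η^2 * ρ^2 * t) * Real.exp (η^2 * ρ^2) := by
            have h1 : (1 + η^2*ρ^2) ≤ Real.exp (η^2*ρ^2) := by
              have := Real.add_one_le_exp (η^2*ρ^2); linarith
            have h2 : (0:ℝ) ≤ ∑ i, Real.exp (-η * m t i) :=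
              Finset.sum_nonneg fun i _ => (Real.exp_pos _).le
            calc (∑ i, Real.exp (-η * m t i)) * (1 + η^2*ρ^2)
                ≤ (∑ i, Real.exp (-η * m t i)) * Real.exp (η^2*ρ^2) :=
                  mul_le_mul_of_nonneg_left h1 h2
              _ ≤ (n:ℝ) * Real.exp (η^2 * ρ^2 * t) * Real.exp (η^2*ρ^2) :=
                  mul_le_mul_of_nonneg_right ih' (Real.exp_pos _).le
        _ = (n:ℝ) * Real.exp (η^2 * ρ^2 * ((t+1:ℕ):ℝ)) := by
            rw [mul_assoc, ← Real.exp_add]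
            congr 1
            push_cast
            ring
  intro i
  -- lower bound on m T i
  have hone : Real.exp (-η * m T i) ≤ (n:ℝ) * Real.exp (η^2 * ρ^2 * T) := by
    refine le_trans ?_ (hΦ T le_rfl)
    exact Finset.single_le_sum (f := fun i => Real.exp (-η * m T i))
      (fun i _ => (Real.exp_pos _).le) (Finset.mem_univ i)
  have hlog : -η * m T i ≤ Real.log n + η^2 * ρ^2 * T := by
    have : (n:ℝ) * Real.exp (η^2 * ρ^2 * T) = Real.exp (Real.log n + η^2 * ρ^2 * T) := by
      rw [Real.exp_add, Real.exp_log (by linarith)]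
    rw [this] at hone
    exact Real.exp_le_exp.mp hone
  -- relate goal to m T i
  have hTε : 4 * ρ^2 * Real.log n ≤ ε^2 * T := by
    rw [ge_iff_le, div_le_iff₀ (by positivity)] at hT
    linarith [hT]
  have hm_lb : -(ε * T) ≤ m T i := by
    have h1 : η * m T i ≥ -(Real.log n + η^2 * ρ^2 * T) := by linarith
    have h2 : η * (ε * T) = ε^2 * T / (2 * ρ^2) := by rw [hηdef]; ring
    have h3 : η^2 * ρ^2 * T = ε^2 * T / (4 * ρ^2) := by
      rw [hηdef]; field_simp; ring
    have h4 : Real.log n ≤ ε^2 * T / (4 * ρ^2) := by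
      rw [le_div_iff₀ (by positivity)]; nlinarith [hTε]
    have h5 : Real.log n + η^2 * ρ^2 * T ≤ η * (ε * T) := by
      rw [h2, h3]
      have he : ε^2 * T / (4 * ρ^2) + ε^2 * T / (4 * ρ^2) = ε^2 * T / (2 * ρ^2) := by
        ring
      linarith
    have he : η * (-(ε * T)) = -(η * (ε * T)) := by ring
    have h6 : η * (-(ε * T)) ≤ η * m T i := by linarith
    exact (mul_le_mul_iff_right₀ hη0).mp h6
  -- final computation
  have hswap : (∑ j, a i j * ((1 / (T : ℝ)) * ∑ t ∈ Finset.Icc 1 T, x t j))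
      = (1 / (T:ℝ)) * (m T i + (T:ℝ) * b i) := by
    calc ∑ j, a i j * ((1 / (T : ℝ)) * ∑ t ∈ Finset.Icc 1 T, x t j)
        = (1 / (T:ℝ)) * ∑ j, ∑ t ∈ Finset.Icc 1 T, a i j * x t j := by
          simp only [Finset.mul_sum]
          refine Finset.sum_congr rfl fun j _ => ?_
          refine Finset.sum_congr rfl fun t _ => ?_
          ring
      _ = (1 / (T:ℝ)) * ∑ t ∈ Finset.Icc 1 T, ∑ j, a i j * x t j := by
          rw [Finset.sum_comm]
      _ = (1 / (T:ℝ)) * (m T i + (T:ℝ) * b i) := by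
          congr 1
          rw [hmsum T le_rfl i]
          have h1 : ∑ t ∈ Finset.Icc 1 T, ∑ j, a i j * x t j
              = ∑ t ∈ Finset.Icc 1 T, (g t i + b i) := by
            refine Finset.sum_congr rfl fun t _ => ?_
            simp only [hg]; ring
          rw [h1, Finset.sum_add_distrib, Finset.sum_const, Nat.card_Icc,
            Nat.add_sub_cancel, nsmul_eq_mul]
  rw [hswap, ge_iff_le, ← sub_nonneg]
  have heq : 1 / (T:ℝ) * (m T i + (T:ℝ) * b i) - (b i - ε) = (m T i + ε * T) / T := by
    field_simp; ring
  rw [heq]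
  apply div_nonneg _ hT0.le
  linarith [hm_lb]
end
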